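/- Let r ≥ 4 and α ∈ (0,1), and let G be a graph with n vertices such that for every pair of disjoint sets X, Y ⊆ V(G), each of size at least αn, there exists a copy of K_{r+1}^− in G with one vertex of degree r−1 in X and all other vertices in Y. Then G contains an (r, ℓ)-chain for every nonnegative integer ℓ < (1 − (r+2)α)·n/r. -/

import Mathlib

/-!
Statement 10 (Lemma 4.4): let `r ≥ 4`, `α ∈ (0,1)`, and let `G` be a graph on `n`
vertices such that for all disjoint `X, Y ⊆ V(G)` of size at least `αn` each, there is a
copy of `K_{r+1}⁻` in `G` with one vertex of degree `r-1` in `X` and all other vertices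
in `Y`.  Then `G` contains an `(r, ℓ)`-chain for every `ℓ < (1 - (r+2)α)n/r`.
-/
open Finset

/-- The canonical `(r, ℓ)`-chain: the graph on vertex set `{0, 1, …, rℓ}` obtained by
sequentially gluing `ℓ` copies of `K_{r+1}⁻` (the complete graph on `r+1` vertices minus
one edge).  The `j`-th copy (for `0 ≤ j < ℓ`) lives on the vertices `{rj, …, r(j+1)}`,
its missing edge being `{rj, r(j+1)}`; consecutive copies are glued at the common vertex,
which is a degree-`(r-1)` endpoint of the missing edge in both copies.  The `(r,0)`-chain
is a single vertex. -/
def chainGraph (r ℓ : ℕ) : SimpleGraph (Fin (r * ℓ + 1)) where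
  Adj a b := a ≠ b ∧ ∃ j : ℕ, j < ℓ ∧
    r * j ≤ a.val ∧ a.val ≤ r * (j + 1) ∧ r * j ≤ b.val ∧ b.val ≤ r * (j + 1) ∧
    ¬(a.val = r * j ∧ b.val = r * (j + 1)) ∧ ¬(b.val = r * j ∧ a.val = r * (j + 1))
  symm := by
    constructor
    rintro a b ⟨hne, j, hj, h1, h2, h3, h4, h5, h6⟩
    exact ⟨hne.symm, j, hj, h3, h4, h1, h2, h6, h5⟩
  loopless := by constructor; rintro a ⟨hne, -⟩; exact hne rfl

/-- The set of removable vertices of the canonical `(r, ℓ)`-chain: the `ℓ - 1` shared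
(identified) degree-`(r-1)` vertices together with the two unidentified endpoints of the
missing edges of the first and last copy of `K_{r+1}⁻`; in the canonical labelling these
are exactly the multiples of `r`. -/
def chainR (r ℓ : ℕ) : Finset (Fin (r * ℓ + 1)) :=
  Finset.univ.filter (fun v => r ∣ v.val)

/-- `φ` is an embedding of the `(r, ℓ)`-chain into `G` as a subgraph (a copy of the
`(r, ℓ)`-chain in `G`). -/
def IsChainEmb {V : Type} (G : SimpleGraph V) (r ℓ : ℕ) (φ : Fin (r * ℓ + 1) → V) : Prop :=
  Function.Injective φ ∧ ∀ a b, (chainGraph r ℓ).Adj a b → G.Adj (φ a) (φ b)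

/-- The subgraph of `G` induced by the vertex set `U` contains a `K_r`-factor. -/
def HasKrFactorOn {V : Type} [DecidableEq V] (G : SimpleGraph V) (r : ℕ)
    (U : Finset V) : Prop :=
  ∃ P : Finset (Finset V),
    (∀ S ∈ P, G.IsNClique r S) ∧
    (∀ S ∈ P, ∀ T ∈ P, S ≠ T → Disjoint S T) ∧
    P.biUnion id = U


def GoodF {n : ℕ} (G : SimpleGraph (Fin n)) (r k : ℕ) (f : ℕ → Fin n) : Prop :=
  (∀ a b, a ≤ r*k → b ≤ r*k → f a = f b → a = b) ∧
  ∀ j, j < k → ∀ a b, r*j ≤ a → a ≤ r*(j+1) → r*j ≤ b → b ≤ r*(j+1) →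
    a ≠ b → ¬(a = r*j ∧ b = r*(j+1)) → ¬(b = r*j ∧ a = r*(j+1)) → G.Adj (f a) (f b)

def HasCopy {n : ℕ} (G : SimpleGraph (Fin n)) (r : ℕ) (F : Finset (Fin n)) (x : Fin n) : Prop :=
  ∃ S : Finset (Fin n), S ⊆ F ∧ G.IsNClique r S ∧ ∃ y ∈ S, ∀ z ∈ S, z ≠ y → G.Adj x z

lemma key {n : ℕ} (r : ℕ) (hr : 4 ≤ r) (α : ℝ) (hα : 0 < α)
    (G : SimpleGraph (Fin n))
    (H : ∀ X Y : Finset (Fin n), Disjoint X Y →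
          α * (n : ℝ) ≤ (X.card : ℝ) → α * (n : ℝ) ≤ (Y.card : ℝ) →
          ∃ x ∈ X, ∃ S ⊆ Y, G.IsNClique r S ∧
            ∃ y ∈ S, ∀ z ∈ S, z ≠ y → G.Adj x z)
    (ℓ : ℕ) (hline : (r:ℝ)*ℓ + ((r:ℝ)+2)*(α*n) < n) :
    ∀ M k (f : ℕ → Fin n) (USED DEAD : Finset (Fin n)),
      GoodF G r k f →
      (∀ a, a ≤ r*k → f a ∈ USED) →
      (∀ a, a ≤ r*k → f a ∉ DEAD) →
      DEAD ⊆ USED →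
      (∀ x ∈ DEAD, ¬ HasCopy G r USEDᶜ x) →
      USED.card ≤ r*k + 1 + r*DEAD.card →
      (DEAD.card : ℝ) < α*n →
      k ≤ ℓ →
      ℓ + 2*⌈α*(n:ℝ)⌉₊ ≤ M + k + 2*DEAD.card →
      ∃ f', GoodF G r ℓ f' := by
  have hr4 : (4:ℝ) ≤ r := by exact_mod_cast hr
  have hrpos : 0 < r := by omega
  intro M
  induction M with
  | zero =>
    intro k f USED DEAD hgood himg hnd hDU hdead hcard hdlt hkl hM
    rcases eq_or_lt_of_le hkl with h | h
    · exact ⟨f, h ▸ hgood⟩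
    · exfalso
      have hdB : DEAD.card < ⌈α*(n:ℝ)⌉₊ := Nat.lt_ceil.2 hdlt
      omega
  | succ M IH =>
    intro k f USED DEAD hgood himg hnd hDU hdead hcard hdlt hkl hM
    rcases eq_or_lt_of_le hkl with heq | hk
    · exact ⟨f, heq ▸ hgood⟩
    have hmulsucc : r*(k+1) = r*k + r := by ring
    by_cases hstuck : HasCopy G r USEDᶜ (f (r*k))
    · -- forward step
      obtain ⟨S, hSU, hSclq, y, hyS, hadj⟩ := hstuck
      have hScard : S.card = r := hSclq.card_eq
      have hycard : (S.erase y).card = r - 1 := by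
        rw [card_erase_of_mem hyS, hScard]
      set g := (S.erase y).orderIsoOfFin hycard with hgdef
      set f' : ℕ → Fin n := fun i =>
        if i ≤ r*k then f i
        else if h : i - (r*k+1) < r - 1 then (g ⟨i - (r*k+1), h⟩ : Fin n)
        else y with hf'def
      have hSfresh : ∀ z ∈ S, z ∉ USED := fun z hz => Finset.mem_compl.1 (hSU hz)
      have hfold : ∀ i, i ≤ r*k → f' i = f i := by
        intro i h; simp only [hf'def]; rw [if_pos h]
      have hfmid : ∀ i, r*k < i → i < r*(k+1) → f' i ∈ S.erase y := by
        intro i h1 h2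
        have h3 : ¬ i ≤ r*k := by omega
        have h4 : i - (r*k+1) < r - 1 := by omega
        simp only [hf'def]
        rw [if_neg h3, dif_pos h4]
        exact (g ⟨i - (r*k+1), h4⟩).2
      have hfend : f' (r*(k+1)) = y := by
        have h3 : ¬ r*(k+1) ≤ r*k := by omega
        have h4 : ¬ (r*(k+1) - (r*k+1) < r - 1) := by omega
        simp only [hf'def]
        rw [if_neg h3, dif_neg h4]
      have hmidinj : ∀ i j, r*k < i → i < r*(k+1) → r*k < j → j < r*(k+1) →
          f' i = f' j → i = j := by
        intro i j hi1 hi2 hj1 hj2 hij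
        have hi3 : ¬ i ≤ r*k := by omega
        have hi4 : i - (r*k+1) < r - 1 := by omega
        have hj3 : ¬ j ≤ r*k := by omega
        have hj4 : j - (r*k+1) < r - 1 := by omega
        simp only [hf'def] at hij
        rw [if_neg hi3, dif_pos hi4, if_neg hj3, dif_pos hj4] at hij
        have h5 : i - (r*k+1) = j - (r*k+1) :=
          Fin.mk.inj_iff.1 (g.injective (Subtype.coe_injective hij))
        omega
      have hval : ∀ c, r*k < c → c ≤ r*(k+1) → f' c ∈ S := by
        intro c hc1 hc2
        rcases eq_or_lt_of_le hc2 with rfl | hlt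
        · rw [hfend]; exact hyS
        · exact mem_of_mem_erase (hfmid c hc1 hlt)
      have hinj' : ∀ a b, a ≤ r*(k+1) → b ≤ r*(k+1) → f' a = f' b → a = b := by
        intro a b ha hb hab
        by_cases ha1 : a ≤ r*k <;> by_cases hb1 : b ≤ r*k
        · rw [hfold a ha1, hfold b hb1] at hab
          exact hgood.1 a b ha1 hb1 hab
        · exfalso
          rw [hfold a ha1] at hab
          exact hSfresh _ (hval b (by omega) hb) (hab ▸ himg a ha1)
        · exfalso
          rw [hfold b hb1] at hab
          exact hSfresh _ (hval a (by omega) ha) (hab ▸ himg b hb1)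
        · rcases eq_or_lt_of_le ha with rfl | ha2 <;> rcases eq_or_lt_of_le hb with hb' | hb2
          · omega
          · exfalso
            rw [hfend] at hab
            exact (mem_erase.1 (hfmid b (by omega) hb2)).1 hab.symm
          · exfalso
            rw [hb', hfend] at hab
            exact (mem_erase.1 (hfmid a (by omega) ha2)).1 hab
          · exact hmidinj a b (by omega) ha2 (by omega) hb2 hab
      have hadj' : ∀ j, j < k+1 → ∀ a b, r*j ≤ a → a ≤ r*(j+1) → r*j ≤ b → b ≤ r*(j+1) →
          a ≠ b → ¬(a = r*j ∧ b = r*(j+1)) → ¬(b = r*j ∧ a = r*(j+1)) →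
          G.Adj (f' a) (f' b) := by
        intro j hj a b h1 h2 h3 h4 hne hm1 hm2
        rcases Nat.lt_succ_iff_lt_or_eq.1 hj with hj' | rfl
        · have hj1 : r*(j+1) ≤ r*k := Nat.mul_le_mul_left r hj'
          rw [hfold a (le_trans h2 hj1), hfold b (le_trans h4 hj1)]
          exact hgood.2 j hj' a b h1 h2 h3 h4 hne hm1 hm2
        · -- j = k block
          have hclq := hSclq.isClique
          rcases eq_or_lt_of_le h1 with ha0 | ha0 <;> rcases eq_or_lt_of_le h3 with hb0 | hb0
          · omega
          · -- a = r*j, b > r*j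
            rcases eq_or_lt_of_le h4 with hb1 | hb1
            · exact absurd ⟨ha0.symm, hb1⟩ hm1
            · have hbm := hfmid b hb0 hb1
              rw [← ha0, hfold (r*j) (le_refl _)]
              exact hadj _ (mem_of_mem_erase hbm) (ne_of_mem_erase hbm)
          · -- b = r*j, a > r*j
            rcases eq_or_lt_of_le h2 with ha1 | ha1
            · exact absurd ⟨hb0.symm, ha1⟩ hm2
            · have ham := hfmid a ha0 ha1
              rw [← hb0, hfold (r*j) (le_refl _)]
              exact (hadj _ (mem_of_mem_erase ham) (ne_of_mem_erase ham)).symm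
          · -- both > r*j : clique part
            have hva := hval a ha0 h2
            have hvb := hval b hb0 h4
            have hnev : f' a ≠ f' b := by
              intro hcon
              rcases eq_or_lt_of_le h2 with ha1 | ha1 <;> rcases eq_or_lt_of_le h4 with hb1 | hb1
              · omega
              · rw [ha1, hfend] at hcon
                exact (mem_erase.1 (hfmid b hb0 hb1)).1 hcon.symm
              · rw [hb1, hfend] at hcon
                exact (mem_erase.1 (hfmid a ha0 ha1)).1 hcon
              · exact hne (hmidinj a b ha0 ha1 hb0 hb1 hcon)
            exact hclq (mem_coe.2 hva) (mem_coe.2 hvb) hnev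
      refine IH (k+1) f' (USED ∪ S) DEAD ⟨hinj', hadj'⟩ ?_ ?_ ?_ ?_ ?_ ?_ hk ?_
      · intro a ha
        by_cases h : a ≤ r*k
        · exact mem_union_left _ ((hfold a h) ▸ himg a h)
        · exact mem_union_right _ (hval a (by omega) ha)
      · intro a ha hmem
        by_cases h : a ≤ r*k
        · exact hnd a h ((hfold a h) ▸ hmem)
        · exact hSfresh _ (hval a (by omega) ha) (hDU hmem)
      · exact hDU.trans subset_union_left
      · intro x hx ⟨S', hS', rest⟩
        exact hdead x hx ⟨S', hS'.trans (compl_subset_compl.2 subset_union_left), rest⟩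
      · calc (USED ∪ S).card ≤ USED.card + S.card := card_union_le _ _
          _ ≤ (r*k + 1 + r*DEAD.card) + r := by rw [hScard]; omega
          _ = r*(k+1) + 1 + r*DEAD.card := by omega
      · exact hdlt
      · omega
    · -- stuck : death step
      have heU : f (r*k) ∈ USED := himg _ (le_refl _)
      have heD : f (r*k) ∉ DEAD := hnd _ (le_refl _)
      have husedn : USED.card ≤ n := by simpa using card_le_univ USED
      have hYcard : ((USEDᶜ : Finset (Fin n)).card : ℝ) = (n:ℝ) - USED.card := by
        rw [card_compl, Fintype.card_fin, Nat.cast_sub husedn]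
      have hcardR : (USED.card:ℝ) ≤ (r:ℝ)*k + 1 + (r:ℝ)*DEAD.card := by
        exact_mod_cast hcard
      have hkR : ((k:ℝ)+1) ≤ (ℓ:ℝ) := by exact_mod_cast hk
      have hrk : (r:ℝ)*k + r ≤ (r:ℝ)*ℓ := by nlinarith
      have hrd : (r:ℝ)*DEAD.card ≤ (r:ℝ)*(α*n) := by nlinarith
      have hnn : (0:ℝ) ≤ (n:ℝ) := Nat.cast_nonneg n
      have hd1 : (DEAD.card : ℝ) + 1 < α*n := by
        by_contra hcon
        push_neg at hcon
        have hdisj : Disjoint (insert (f (r*k)) DEAD) USEDᶜ := by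
          rw [Finset.disjoint_left]
          intro x hx hxc
          rcases Finset.mem_insert.1 hx with rfl | hx'
          · exact (Finset.mem_compl.1 hxc) heU
          · exact (Finset.mem_compl.1 hxc) (hDU hx')
        have hXcard : α*(n:ℝ) ≤ ((insert (f (r*k)) DEAD).card : ℝ) := by
          rw [card_insert_of_notMem heD]
          push_cast
          linarith
        have hYbig : α*(n:ℝ) ≤ ((USEDᶜ : Finset (Fin n)).card : ℝ) := by
          rw [hYcard]
          nlinarith [mul_nonneg hα.le hnn]
        obtain ⟨x, hxX, S, hSY, hSclq, y, hyS, hadj⟩ :=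
          H (insert (f (r*k)) DEAD) USEDᶜ hdisj hXcard hYbig
        rcases Finset.mem_insert.1 hxX with rfl | hx'
        · exact hstuck ⟨S, hSY, hSclq, y, hyS, hadj⟩
        · exact hdead x hx' ⟨S, hSY, hSclq, y, hyS, hadj⟩
      have hnewdcard : (insert (f (r*k)) DEAD).card = DEAD.card + 1 :=
        card_insert_of_notMem heD
      have hnewdlt : ((insert (f (r*k)) DEAD).card : ℝ) < α*n := by
        rw [hnewdcard]; push_cast; linarith
      by_cases hk0 : k = 0
      · -- k = 0 : restart
        subst hk0
        have hUlt : USED.card < n := by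
          have : (USED.card:ℝ) < (n:ℝ) := by nlinarith [mul_nonneg hα.le hnn]
          exact_mod_cast this
        have hcne : (USEDᶜ : Finset (Fin n)).Nonempty := by
          rw [← card_pos, card_compl, Fintype.card_fin]; omega
        obtain ⟨w, hw⟩ := hcne
        have hwU : w ∉ USED := Finset.mem_compl.1 hw
        refine IH 0 (fun _ => w) (insert w USED) (insert (f (r*0)) DEAD)
          ⟨fun a b ha hb _ => by simp only [Nat.mul_zero, Nat.le_zero] at ha hb; omega,
           fun j hj => absurd hj (Nat.not_lt_zero j)⟩
          (fun a _ => mem_insert_self _ _) ?_ ?_ ?_ ?_ hnewdlt (Nat.zero_le _) ?_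
        · intro a _ hmem
          rcases Finset.mem_insert.1 hmem with h | h
          · exact hwU ((show w = f (r*0) from h) ▸ heU)
          · exact hwU (hDU h)
        · intro x hx
          rcases Finset.mem_insert.1 hx with rfl | h
          · exact mem_insert_of_mem heU
          · exact mem_insert_of_mem (hDU h)
        · intro x hx ⟨S', hS', rest⟩
          have hS'' : S' ⊆ USEDᶜ := hS'.trans (compl_subset_compl.2 (subset_insert _ _))
          rcases Finset.mem_insert.1 hx with rfl | h
          · exact hstuck ⟨S', hS'', rest⟩
          · exact hdead x h ⟨S', hS'', rest⟩
        · rw [hnewdcard]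
          have h4 : r*(DEAD.card+1) = r*DEAD.card + r := by ring
          have h5 : (insert w USED).card ≤ USED.card + 1 := card_insert_le _ _
          omega
        · have h3 := hnewdcard
          omega
      · -- k = k'+1 : backtrack
        obtain ⟨k', rfl⟩ : ∃ k', k = k' + 1 := ⟨k - 1, by omega⟩
        have hms : r*(k'+1) = r*k' + r := by ring
        have hmono : r*k' ≤ r*(k'+1) := by omega
        refine IH k' f USED (insert (f (r*(k'+1))) DEAD)
          ⟨fun a b ha hb hab => hgood.1 a b (ha.trans hmono) (hb.trans hmono) hab,
           fun j hj => hgood.2 j (Nat.lt_succ_of_lt hj)⟩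
          (fun a ha => himg a (ha.trans hmono)) ?_ ?_ ?_ ?_ hnewdlt (by omega) ?_
        · intro a ha hmem
          rcases Finset.mem_insert.1 hmem with h | h
          · have := hgood.1 a (r*(k'+1)) (ha.trans hmono) (le_refl _) h
            omega
          · exact hnd a (ha.trans hmono) h
        · intro x hx
          rcases Finset.mem_insert.1 hx with rfl | h
          · exact heU
          · exact hDU h
        · intro x hx
          rcases Finset.mem_insert.1 hx with rfl | h
          · exact hstuck
          · exact hdead x h
        · rw [hnewdcard]
          have h4 : r*(DEAD.card+1) = r*DEAD.card + r := by ring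
          omega
        · have h3 := hnewdcard
          omega

theorem statement_10 :
    ∀ r : ℕ, 4 ≤ r → ∀ α : ℝ, 0 < α → α < 1 →
      ∀ (n : ℕ) (G : SimpleGraph (Fin n)),
        -- a copy of K_{r+1}⁻ with the degree-(r-1) vertex x ∈ X and all other
        -- vertices forming an r-clique S ⊆ Y, x joined to all of S except one vertex y
        (∀ X Y : Finset (Fin n), Disjoint X Y →
          α * (n : ℝ) ≤ (X.card : ℝ) → α * (n : ℝ) ≤ (Y.card : ℝ) →
          ∃ x ∈ X, ∃ S ⊆ Y, G.IsNClique r S ∧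
            ∃ y ∈ S, ∀ z ∈ S, z ≠ y → G.Adj x z) →
        ∀ ℓ : ℕ, (ℓ : ℝ) < (1 - ((r : ℝ) + 2) * α) * (n : ℝ) / (r : ℝ) →
          ∃ φ : Fin (r * ℓ + 1) → Fin n, IsChainEmb G r ℓ φ := by
  intro r hr α hα hα1 n G H ℓ hℓ
  have hr0 : (0:ℝ) < r := by
    have : (4:ℝ) ≤ r := by exact_mod_cast hr
    linarith
  have hline : (r:ℝ)*ℓ + ((r:ℝ)+2)*(α*n) < n := by
    have h2 := (lt_div_iff₀ hr0).1 hℓ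
    nlinarith
  have hn : 0 < n := by
    rcases Nat.eq_zero_or_pos n with h | h
    · exfalso
      subst h
      have h1 : (0:ℝ) ≤ (r:ℝ)*ℓ := by positivity
      simp only [Nat.cast_zero, mul_zero] at hline
      linarith
    · exact h
  have hαn : (0:ℝ) < α * n := by
    have : (0:ℝ) < n := by exact_mod_cast hn
    positivity
  obtain ⟨f, hf⟩ := key r hr α hα G H ℓ hline (ℓ + 2*⌈α*(n:ℝ)⌉₊) 0
    (fun _ => (⟨0, hn⟩ : Fin n)) {(⟨0, hn⟩ : Fin n)} ∅
    ⟨fun a b ha hb _ => by simp only [Nat.mul_zero, Nat.le_zero] at ha hb; omega,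
     fun j hj => absurd hj (Nat.not_lt_zero j)⟩
    (fun a _ => mem_singleton_self _)
    (fun a _ => notMem_empty _)
    (empty_subset _)
    (fun x hx => absurd hx (notMem_empty x))
    (by simp)
    (by simpa using hαn)
    (Nat.zero_le _)
    (by simp)
  refine ⟨fun i => f i.val, ?_, ?_⟩
  · intro a b hab
    exact Fin.ext (hf.1 _ _ (Nat.lt_succ_iff.1 a.isLt) (Nat.lt_succ_iff.1 b.isLt) hab)
  · rintro a b ⟨hne, j, hj, h1, h2, h3, h4, h5, h6⟩
    exact hf.2 j hj _ _ h1 h2 h3 h4 (fun h => hne (Fin.ext h)) h5 h6
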